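/- arXiv:1411.3514 — 2 statements merged into one kernel-verified Lean document; each statement's English description precedes it below -/
import Mathlib

section
/- Let s : ℕ → ℕ be a strictly increasing sequence of positive integers. Define inductively n₁ = 1 and n_{i+1} = 2^{σ_i} + n_i, where for each i, w_i is defined as follows: w_{n_j} is the maximum of a designated block of 2^{n_j} consecutive terms of s (the first block of length 2^{n_1}, then the next of length 2^{n_2}, etc.), w_i = 0 for i not of the form n_j, and σ_i = w_1 + ⋯ + w_i. Then the series ∑_{i=1}^∞ 1/2^{σ_i} diverges. -/
noncomputable section

/-- The initial segment of length `n` of the ray `r` in the infinite binary tree,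
viewed as a vertex (finite binary string). -/
def rayInit (r : ℕ → Bool) (n : ℕ) : List Bool := List.ofFn fun i : Fin n => r i

/-- The set of vertices of the binary tree at depth `i`. -/
def depthNodes (i : ℕ) : Finset (List Bool) :=
  Finset.image (fun f : Fin i → Bool => List.ofFn f) Finset.univ

/-- `w_i`: the maximum of the Whitehead labels at tree depth `i`. -/
def maxw (w : List Bool → ℕ) (i : ℕ) : ℕ := (depthNodes i).sup w

/-- `σ_i = w_1 + w_2 + ⋯ + w_i`. -/
def sigma41 (w : List Bool → ℕ) (i : ℕ) : ℕ := ∑ k ∈ Finset.range i, maxw w (k + 1)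

/-- The labeling of the binary tree from Construction 4.1 applied to the sequence `s`:
there is a sequence of depths `n₁ = 1`, `n_{j+1} = 2^{σ_{n_j}} + n_j`; all labels at depths
not of the form `n_j` are `0`, and the labels at depth `n_j` are exactly the `j`-th block
(of length `2^{n_j}`) of consecutive terms of `s`, assigned bijectively to the nodes. -/
def IsConstruction41 (s : ℕ → ℕ) (w : List Bool → ℕ) : Prop :=
  ∃ n : ℕ → ℕ, n 0 = 1 ∧ (∀ j, n (j + 1) = 2 ^ sigma41 w (n j) + n j) ∧
    (∀ v : List Bool, (∀ j, v.length ≠ n j) → w v = 0) ∧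
    ∀ j, ∃ β : {v : List Bool // v.length = n j} ≃ Fin (2 ^ n j),
      ∀ v : {v : List Bool // v.length = n j},
        w v.val = s ((∑ l ∈ Finset.range j, 2 ^ n l) + (β v : ℕ))

/-- For the labeling of Construction 4.1 associated with a strictly increasing sequence
`s` of positive integers, the series `∑_{i=1}^∞ 1/2^{σ_i}` diverges. -/
theorem construction41_series_diverges (s : ℕ → ℕ) (hs : StrictMono s)
    (hpos : ∀ i, 0 < s i) (w : List Bool → ℕ) (hw : IsConstruction41 s w) :
    Filter.Tendsto (fun N => ∑ i ∈ Finset.range N, (1 : ℝ) / 2 ^ sigma41 w (i + 1))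
      Filter.atTop Filter.atTop := by
  obtain ⟨n, hn0, hnrec, hzero, -⟩ := hw
  set F : ℕ → ℝ := fun N => ∑ i ∈ Finset.range N, (1 : ℝ) / 2 ^ sigma41 w (i + 1) with hF
  have hnlt : ∀ j, n j < n (j + 1) := by
    intro j
    rw [hnrec j]
    exact Nat.lt_add_of_pos_left (pow_pos two_pos _)
  have hnmono : StrictMono n := strictMono_nat_of_lt_succ hnlt
  have hnpos : ∀ j, 1 ≤ n j := by
    intro j
    calc 1 = n 0 := hn0.symm
    _ ≤ n j := hnmono.monotone (Nat.zero_le j)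
  -- maxw vanishes away from the depths n j
  have hmax0 : ∀ d, (∀ j, d ≠ n j) → maxw w d = 0 := by
    intro d hd
    apply Nat.le_antisymm _ (Nat.zero_le _)
    apply Finset.sup_le
    intro v hv
    simp only [depthNodes, Finset.mem_image] at hv
    obtain ⟨f, -, rfl⟩ := hv
    rw [hzero _ (by simpa using hd)]
  have hsig_step : ∀ i, (∀ j, i + 1 ≠ n j) → sigma41 w (i + 1) = sigma41 w i := by
    intro i hi
    unfold sigma41
    rw [Finset.sum_range_succ, hmax0 _ hi, add_zero]
  -- sigma is constant on each block [n J, n (J+1))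
  have hsig_const : ∀ J k, n J + k < n (J + 1) → sigma41 w (n J + k) = sigma41 w (n J) := by
    intro J k
    induction k with
    | zero => intro _; rfl
    | succ k ih =>
      intro hk
      have hk' : n J + k < n (J + 1) := by omega
      have hne : ∀ j, n J + k + 1 ≠ n j := by
        intro j
        rcases le_or_gt j J with h | h
        · have := hnmono.monotone h
          omega
        · have := hnmono.monotone (show J + 1 ≤ j from h)
          omega
      rw [← Nat.add_assoc, hsig_step _ hne, ih hk']
  -- the partial sum up to depth n J - 1 equals J
  have key : ∀ J, F (n J - 1) = J := by
    intro J
    induction J with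
    | zero => simp [hF, hn0]
    | succ J ih =>
      have h1 : n J - 1 ≤ n (J + 1) - 1 := by have := hnlt J; omega
      have main : ∑ i ∈ Finset.range (n (J + 1) - 1), (1 : ℝ) / 2 ^ sigma41 w (i + 1)
          = (J : ℝ) + 1 := by
        rw [Finset.range_eq_Ico, ← Finset.sum_Ico_consecutive _ (Nat.zero_le _) h1,
          ← Finset.range_eq_Ico]
        have hblock : ∑ i ∈ Finset.Ico (n J - 1) (n (J + 1) - 1),
            (1 : ℝ) / 2 ^ sigma41 w (i + 1) = 1 := by
          have hconst : ∀ i ∈ Finset.Ico (n J - 1) (n (J + 1) - 1),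
              (1 : ℝ) / 2 ^ sigma41 w (i + 1) = (1 : ℝ) / 2 ^ sigma41 w (n J) := by
            intro i hi
            simp only [Finset.mem_Ico] at hi
            have h1J := hnpos J
            have hieq : i + 1 = n J + (i + 1 - n J) := by omega
            rw [hieq, hsig_const J (i + 1 - n J) (by omega)]
          rw [Finset.sum_congr rfl hconst, Finset.sum_const, Nat.card_Ico]
          have hcard : n (J + 1) - 1 - (n J - 1) = 2 ^ sigma41 w (n J) := by
            rw [hnrec J]
            have := hnpos J
            generalize 2 ^ sigma41 w (n J) = e
            omega
          rw [hcard, nsmul_eq_mul]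
          push_cast
          rw [one_div, mul_inv_cancel₀]
          positivity
        have ih' : ∑ i ∈ Finset.range (n J - 1), (1 : ℝ) / 2 ^ sigma41 w (i + 1) = (J : ℝ) := ih
        rw [ih', hblock]
      show ∑ i ∈ Finset.range (n (J + 1) - 1), (1 : ℝ) / 2 ^ sigma41 w (i + 1)
          = (((J + 1 : ℕ)) : ℝ)
      rw [main]
      push_cast
      ring
  have hFmono : Monotone F := by
    apply monotone_nat_of_le_succ
    intro N
    rw [hF]
    simp only
    rw [Finset.sum_range_succ]
    have : (0:ℝ) ≤ (1 : ℝ) / 2 ^ sigma41 w (N + 1) := by positivity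
    linarith
  apply Filter.tendsto_atTop_atTop_of_monotone hFmono
  intro b
  obtain ⟨J, hJ⟩ := exists_nat_ge b
  exact ⟨n J - 1, by rw [key J]; exact hJ⟩
end
end

section
/- In Construction 4.1, if x and y are distinct points of the Cantor set C(s), then their Whitehead sequences s(x) and s(y) do not have the same tail: for all n, m there exists k with s(x)_{n+k} ≠ s(y)_{m+k}. -/
noncomputable section

/-- The combinatorial heart of Construction 4.1: if the nonzero labels on the binary
tree are pairwise distinct and every ray carries infinitely many nonzero labels, then
the label sequences along two distinct rays do not have the same tail. -/
theorem distinct_rays_no_common_tail (w : List Bool → ℕ)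
    (hinj : ∀ u v : List Bool, w u ≠ 0 → w v ≠ 0 → w u = w v → u = v)
    (hinf : ∀ r : ℕ → Bool, {n : ℕ | w (rayInit r n) ≠ 0}.Infinite)
    (r r' : ℕ → Bool) (hrr : r ≠ r') :
    ∀ n m : ℕ, ∃ k : ℕ, w (rayInit r (n + k)) ≠ w (rayInit r' (m + k)) := by
  intro n m
  by_contra h
  push_neg at h
  obtain ⟨i, hi⟩ : ∃ i, r i ≠ r' i := Function.ne_iff.mp hrr
  obtain ⟨N, hN1, hN2⟩ := (hinf r).exists_gt (max n i)
  have hnN : n < N := lt_of_le_of_lt (le_max_left _ _) hN2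
  have hiN : i < N := lt_of_le_of_lt (le_max_right _ _) hN2
  have hk : n + (N - n) = N := by omega
  have heq := h (N - n)
  rw [hk] at heq
  have hne : w (rayInit r N) ≠ 0 := hN1
  have hne' : w (rayInit r' (m + (N - n))) ≠ 0 := heq ▸ hne
  have hlist := hinj _ _ hne hne' heq
  have hlen : N = m + (N - n) := by
    have := congrArg List.length hlist
    simpa [rayInit] using this
  rw [← hlen] at hlist
  unfold rayInit at hlist
  rw [List.ofFn_inj] at hlist
  exact hi (congrFun hlist ⟨i, hiN⟩)
end
end
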